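/- Any distributive lattice with 0 endowed with the overlap contact relation satisfies condition (D2): if c_{1,0} ⊓ c_{1,1} = 0, …, c_{n,0} ⊓ c_{n,1} = 0 and for every f : {1,…,n} → {0,1} either b ≤ c_{1,f(1)} ⊔ … ⊔ c_{n,f(n)} or a ≤ c_{1,f(1)} ⊔ … ⊔ c_{n,f(n)}, then a ⊓ b = 0. -/

import Mathlib

/-- A distributive lattice with `⊥` and the overlap contact satisfies (D2). -/
theorem overlap_satisfies_d2 {L : Type*} [DistribLattice L] [OrderBot L]
    (n : ℕ) (a b : L) (c : Fin n → Fin 2 → L)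
    (hc : ∀ i, c i 0 ⊓ c i 1 = ⊥)
    (h : ∀ f : Fin n → Fin 2,
      b ≤ Finset.univ.sup (fun i => c i (f i)) ∨
      a ≤ Finset.univ.sup (fun i => c i (f i))) :
    a ⊓ b = ⊥ := by
  -- work in `WithTop L`, which is a bounded distributive lattice
  have coe_sup : ∀ f : Fin n → Fin 2,
      ((Finset.univ.sup (fun i => c i (f i)) : L) : WithTop L)
        = Finset.univ.sup (fun i => ((c i (f i) : L) : WithTop L)) := by
    intro f
    exact Finset.comp_sup_eq_sup_comp (fun x : L => (x : WithTop L))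
      (fun x y => WithTop.coe_sup x y) (by rfl)
  have key : ((a : WithTop L) ⊓ (b : WithTop L)) ≤
      ((Finset.univ.pi fun _ : Fin n => (Finset.univ : Finset (Fin 2))).inf
        fun g => Finset.univ.attach.sup fun i => ((c i (g i.1 i.2) : L) : WithTop L)) := by
    refine Finset.le_inf fun g hg => ?_
    have := h (fun i => g i (Finset.mem_univ i))
    have hrw : (Finset.univ.attach.sup fun i => ((c i (g i.1 i.2) : L) : WithTop L))
        = Finset.univ.sup fun i => ((c i (g i (Finset.mem_univ i)) : L) : WithTop L) :=
      Finset.sup_attach Finset.univ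
        (fun i => ((c i (g i (Finset.mem_univ i)) : L) : WithTop L))
    rw [hrw, ← coe_sup (fun i => g i (Finset.mem_univ i))]
    rcases this with hb | ha
    · exact le_trans inf_le_right (WithTop.coe_le_coe.mpr hb)
    · exact le_trans inf_le_left (WithTop.coe_le_coe.mpr ha)
  rw [← Finset.sup_inf (Finset.univ : Finset (Fin n))
      (fun _ => (Finset.univ : Finset (Fin 2)))
      (fun i k => ((c i k : L) : WithTop L))] at key
  have hbot : (Finset.univ.sup fun i : Fin n =>
      ((Finset.univ : Finset (Fin 2)).inf fun k => ((c i k : L) : WithTop L))) = ⊥ := by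
    refine (Finset.sup_eq_bot_iff _ _).mpr fun i _ => ?_
    have : ((Finset.univ : Finset (Fin 2)).inf fun k => ((c i k : L) : WithTop L))
        = ((c i 0 : L) : WithTop L) ⊓ ((c i 1 : L) : WithTop L) := by
      simp [Fin.univ_succ]
    rw [this, ← WithTop.coe_inf, hc i]
    rfl
  rw [hbot, le_bot_iff, ← WithTop.coe_inf] at key
  exact WithTop.coe_eq_coe.mp key
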